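/- For n ∈ ℕ and f : [0,1] → ℝ define the Bernstein–Kantorovich operator K_n(f)(x) = (n+1) · Σ_{k=0}^n binom(n,k) x^k (1−x)^{n−k} ∫_{k/(n+1)}^{(k+1)/(n+1)} f(t) dt. If f : [0,1] → ℝ is Riemann integrable (i.e. bounded with Lebesgue-null set of discontinuity points) and x ∈ [0,1] is a point of continuity of f, then K_n(f)(x) → f(x) as n → ∞. In particular K_n(f)(x) → f(x) for Lebesgue-almost every x ∈ [0,1]. -/

import Mathlib

open MeasureTheory Filter Topology Set

/-- The Bernstein–Kantorovich operator
`K_n(f)(x) = (n+1) Σ_{k=0}^n C(n,k) x^k (1-x)^{n-k} ∫_{k/(n+1)}^{(k+1)/(n+1)} f`. -/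
noncomputable def bernsteinKantorovich (n : ℕ) (f : ℝ → ℝ) (x : ℝ) : ℝ :=
  ((n : ℝ) + 1) * ∑ k ∈ Finset.range (n + 1),
    (n.choose k : ℝ) * x ^ k * (1 - x) ^ (n - k) *
      ∫ t in ((k : ℝ) / ((n : ℝ) + 1))..(((k : ℝ) + 1) / ((n : ℝ) + 1)), f t

lemma bk_sum_eq_one {n : ℕ} {x : ℝ} :
    ∑ k ∈ Finset.range (n + 1), (n.choose k : ℝ) * x ^ k * (1 - x) ^ (n - k) = 1 := by
  have h := congrArg (Polynomial.eval x) (bernsteinPolynomial.sum ℝ n)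
  simpa [bernsteinPolynomial, Polynomial.eval_finset_sum] using h

lemma bk_variance {n : ℕ} {x : ℝ} :
    ∑ k ∈ Finset.range (n + 1),
      ((n : ℝ) * x - (k : ℝ)) ^ 2 * ((n.choose k : ℝ) * x ^ k * (1 - x) ^ (n - k))
      = (n : ℝ) * x * (1 - x) := by
  have h := congrArg (Polynomial.eval x) (bernsteinPolynomial.variance ℝ n)
  simpa [bernsteinPolynomial, Polynomial.eval_finset_sum, nsmul_eq_mul] using h

lemma bk_sq_bound (a b c : ℝ) : (a - (b + 1) * c) ^ 2 ≤ 2 * (b * c - a) ^ 2 + 2 * c ^ 2 := by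
  nlinarith [sq_nonneg (a - b * c + c)]

set_option maxHeartbeats 1000000 in
lemma bk_pointwise (f : ℝ → ℝ) (M : ℝ)
    (hM : ∀ x ∈ Icc (0 : ℝ) 1, |f x| ≤ M)
    (hint : IntegrableOn f (Icc (0 : ℝ) 1) volume)
    (x : ℝ) (hx : x ∈ Icc (0 : ℝ) 1)
    (hcx : ContinuousWithinAt f (Icc (0 : ℝ) 1) x) :
    Tendsto (fun n => bernsteinKantorovich n f x) atTop (𝓝 (f x)) := by
  have hM0 : 0 ≤ M := (abs_nonneg _).trans (hM x hx)
  rw [Metric.tendsto_atTop]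
  intro ε hε
  obtain ⟨δ, hδ0, hδ⟩ := Metric.continuousWithinAt_iff.mp hcx (ε / 2) (by positivity)
  obtain ⟨N, hN⟩ := exists_nat_ge (max (4 / δ) (64 * M / (ε * δ ^ 2)))
  refine ⟨N, fun n hn => ?_⟩
  set m : ℝ := (n : ℝ) + 1 with hm
  have hm0 : 0 < m := by positivity
  have hmN : (N : ℝ) ≤ m := by
    have : (N : ℝ) ≤ (n : ℝ) := Nat.cast_le.mpr hn
    linarith
  have hA : 4 / δ ≤ m := le_trans (le_trans (le_max_left _ _) hN) hmN
  have hB : 64 * M / (ε * δ ^ 2) ≤ m := le_trans (le_trans (le_max_right _ _) hN) hmN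
  have hinv : 1 / m ≤ δ / 4 := by
    rw [div_le_iff₀ hδ0] at hA
    rw [div_le_div_iff₀ hm0 (by norm_num : (0:ℝ) < 4)]
    nlinarith
  set p : ℕ → ℝ := fun k => (n.choose k : ℝ) * x ^ k * (1 - x) ^ (n - k) with hp
  have hp0 : ∀ k, 0 ≤ p k := fun k =>
    mul_nonneg (mul_nonneg (Nat.cast_nonneg _) (pow_nonneg hx.1 _))
      (pow_nonneg (by linarith [hx.2]) _)
  have hsum : ∑ k ∈ Finset.range (n + 1), p k = 1 := bk_sum_eq_one
  have hvar : ∑ k ∈ Finset.range (n + 1), ((n : ℝ) * x - (k : ℝ)) ^ 2 * p k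
      = (n : ℝ) * x * (1 - x) := bk_variance
  set C : ℕ → ℝ := fun k => ε / 2 + 8 * M / δ ^ 2 * ((k : ℝ) / m - x) ^ 2 with hCdef
  have hC0 : ∀ k, 0 ≤ C k := fun k => by
    have : (0:ℝ) ≤ 8 * M / δ ^ 2 * ((k : ℝ) / m - x) ^ 2 := by positivity
    simp only [hCdef]; linarith
  -- each interval is inside [0,1]
  have hsub : ∀ k ∈ Finset.range (n + 1),
      Icc ((k : ℝ) / m) (((k : ℝ) + 1) / m) ⊆ Icc (0 : ℝ) 1 := by
    intro k hk
    apply Icc_subset_Icc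
    · positivity
    · rw [div_le_one hm0]
      have hkn : k ≤ n := Nat.lt_succ_iff.mp (Finset.mem_range.mp hk)
      have : (k : ℝ) ≤ (n : ℝ) := Nat.cast_le.mpr hkn
      linarith
  have hab : ∀ k : ℕ, (k : ℝ) / m ≤ ((k : ℝ) + 1) / m := fun k => by
    gcongr
    linarith
  have hlen : ∀ k : ℕ, ((k : ℝ) + 1) / m - (k : ℝ) / m = 1 / m := fun k => by
    field_simp
    ring
  -- interval integrability on each subinterval
  have hik : ∀ k ∈ Finset.range (n + 1),
      IntervalIntegrable f volume ((k : ℝ) / m) (((k : ℝ) + 1) / m) := by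
    intro k hk
    apply IntegrableOn.intervalIntegrable
    rw [Set.uIcc_of_le (hab k)]
    exact hint.mono_set (hsub k hk)
  -- pointwise bound on each subinterval
  have hCb : ∀ k ∈ Finset.range (n + 1), ∀ t ∈ Set.uIoc ((k : ℝ) / m) (((k : ℝ) + 1) / m),
      |f t - f x| ≤ C k := by
    intro k hk t ht
    rw [Set.uIoc_of_le (hab k)] at ht
    have htI : t ∈ Icc (0 : ℝ) 1 := hsub k hk ⟨ht.1.le, ht.2⟩
    have hta : |t - (k : ℝ) / m| ≤ 1 / m := by
      rw [abs_le]
      constructor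
      · have := ht.1
        have h1m : 0 < 1 / m := by positivity
        linarith
      · have := ht.2
        have := hlen k
        linarith
    by_cases hnear : |t - x| < δ
    · have h1 := hδ htI (by rwa [Real.dist_eq])
      rw [Real.dist_eq] at h1
      have h2 : (0:ℝ) ≤ 8 * M / δ ^ 2 * ((k : ℝ) / m - x) ^ 2 := by positivity
      simp only [hCdef]
      linarith
    · push_neg at hnear
      have htri : |t - x| ≤ |t - (k : ℝ) / m| + |(k : ℝ) / m - x| := by
        have := abs_sub_abs_le_abs_sub (t - x) (t - (k:ℝ)/m)
        calc |t - x| = |(t - (k:ℝ)/m) + ((k:ℝ)/m - x)| := by ring_nf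
          _ ≤ |t - (k:ℝ)/m| + |(k:ℝ)/m - x| := abs_add_le _ _
      have hax : 3 * δ / 4 ≤ |(k : ℝ) / m - x| := by linarith
      have h2 : (3 * δ / 4) ^ 2 ≤ ((k : ℝ) / m - x) ^ 2 := by
        nlinarith [sq_abs ((k : ℝ) / m - x), abs_nonneg ((k : ℝ) / m - x)]
      have hft : |f t - f x| ≤ 2 * M := by
        have h3 := hM t htI
        have h4 := hM x hx
        calc |f t - f x| ≤ |f t| + |f x| := abs_sub _ _
          _ ≤ 2 * M := by linarith
      have h5 : 2 * M ≤ 8 * M / δ ^ 2 * ((k : ℝ) / m - x) ^ 2 := by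
        have h6 : 8 * M / δ ^ 2 * (3 * δ / 4) ^ 2 ≤ 8 * M / δ ^ 2 * ((k : ℝ) / m - x) ^ 2 :=
          mul_le_mul_of_nonneg_left h2 (by positivity)
        have h7 : 8 * M / δ ^ 2 * (3 * δ / 4) ^ 2 = 9 * M / 2 := by
          field_simp
          ring
        linarith
      simp only [hCdef]
      linarith
  -- integral bound on each subinterval
  have hIb : ∀ k ∈ Finset.range (n + 1),
      |∫ t in ((k : ℝ) / m)..(((k : ℝ) + 1) / m), (f t - f x)| ≤ C k / m := by
    intro k hk
    have h1 := intervalIntegral.norm_integral_le_of_norm_le_const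
      (f := fun t => f t - f x) (a := (k : ℝ) / m) (b := ((k : ℝ) + 1) / m) (C := C k)
      (fun t ht => by rw [Real.norm_eq_abs]; exact hCb k hk t ht)
    rw [Real.norm_eq_abs] at h1
    have h2 : |((k : ℝ) + 1) / m - (k : ℝ) / m| = 1 / m := by
      rw [hlen k, abs_of_pos (by positivity)]
    rw [h2] at h1
    calc |∫ t in ((k : ℝ) / m)..(((k : ℝ) + 1) / m), (f t - f x)| ≤ C k * (1 / m) := h1
      _ = C k / m := by ring
  -- rewrite the difference as a single sum
  have hsplit : ∀ k ∈ Finset.range (n + 1),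
      p k * (m * ∫ t in ((k : ℝ) / m)..(((k : ℝ) + 1) / m), (f t - f x))
        = p k * (m * ∫ t in ((k : ℝ) / m)..(((k : ℝ) + 1) / m), f t) - p k * f x := by
    intro k hk
    rw [intervalIntegral.integral_sub (hik k hk) (intervalIntegrable_const)]
    rw [intervalIntegral.integral_const, hlen k, smul_eq_mul]
    field_simp
  have hdiff : bernsteinKantorovich n f x - f x
      = ∑ k ∈ Finset.range (n + 1),
          p k * (m * ∫ t in ((k : ℝ) / m)..(((k : ℝ) + 1) / m), (f t - f x)) := by
    rw [Finset.sum_congr rfl hsplit, Finset.sum_sub_distrib, ← Finset.sum_mul, hsum, one_mul]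
    congr 1
    show bernsteinKantorovich n f x
      = ∑ k ∈ Finset.range (n + 1),
          p k * (m * ∫ t in ((k : ℝ) / m)..(((k : ℝ) + 1) / m), f t)
    rw [bernsteinKantorovich, ← hm, Finset.mul_sum]
    refine Finset.sum_congr rfl fun k hk => ?_
    simp only [hp]
    ring
  -- main estimate
  have hmain : |bernsteinKantorovich n f x - f x| ≤ ∑ k ∈ Finset.range (n + 1), p k * C k := by
    rw [hdiff]
    refine le_trans (Finset.abs_sum_le_sum_abs _ _) (Finset.sum_le_sum fun k hk => ?_)
    rw [abs_mul, abs_of_nonneg (hp0 k), abs_mul, abs_of_pos hm0]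
    have h1 : m * |∫ t in ((k : ℝ) / m)..(((k : ℝ) + 1) / m), (f t - f x)| ≤ m * (C k / m) :=
      mul_le_mul_of_nonneg_left (hIb k hk) hm0.le
    have h2 : m * (C k / m) = C k := by field_simp
    rw [h2] at h1
    exact mul_le_mul_of_nonneg_left h1 (hp0 k)
  -- sum of the bounds
  have hsumC : ∑ k ∈ Finset.range (n + 1), p k * C k
      = ε / 2 + 8 * M / δ ^ 2 * ∑ k ∈ Finset.range (n + 1), p k * ((k : ℝ) / m - x) ^ 2 := by
    have : ∀ k ∈ Finset.range (n + 1), p k * C k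
        = p k * (ε / 2) + 8 * M / δ ^ 2 * (p k * ((k : ℝ) / m - x) ^ 2) := by
      intro k hk
      simp only [hCdef]
      ring
    rw [Finset.sum_congr rfl this, Finset.sum_add_distrib, ← Finset.sum_mul, hsum, one_mul,
      ← Finset.mul_sum]
  -- variance estimate
  have hV : ∑ k ∈ Finset.range (n + 1), p k * ((k : ℝ) / m - x) ^ 2 ≤ 2 / m := by
    have hterm : ∀ k ∈ Finset.range (n + 1),
        p k * ((k : ℝ) / m - x) ^ 2
          ≤ (2 * (((n : ℝ) * x - (k : ℝ)) ^ 2 * p k) + 2 * (x ^ 2 * p k)) / m ^ 2 := by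
      intro k hk
      rw [le_div_iff₀ (by positivity : (0:ℝ) < m ^ 2)]
      have e1 : ((k : ℝ) / m - x) ^ 2 * m ^ 2 = ((k : ℝ) - m * x) ^ 2 := by
        field_simp
      have e2 : ((k : ℝ) - m * x) ^ 2 ≤ 2 * ((n : ℝ) * x - (k : ℝ)) ^ 2 + 2 * x ^ 2 := by
        rw [hm]
        exact bk_sq_bound _ _ _
      calc p k * ((k : ℝ) / m - x) ^ 2 * m ^ 2 = p k * (((k : ℝ) / m - x) ^ 2 * m ^ 2) := by ring
        _ = p k * ((k : ℝ) - m * x) ^ 2 := by rw [e1]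
        _ ≤ p k * (2 * ((n : ℝ) * x - (k : ℝ)) ^ 2 + 2 * x ^ 2) :=
            mul_le_mul_of_nonneg_left e2 (hp0 k)
        _ = 2 * (((n : ℝ) * x - (k : ℝ)) ^ 2 * p k) + 2 * (x ^ 2 * p k) := by ring
    refine le_trans (Finset.sum_le_sum hterm) ?_
    rw [← Finset.sum_div, Finset.sum_add_distrib, ← Finset.mul_sum, ← Finset.mul_sum,
      ← Finset.mul_sum, hvar, hsum, mul_one]
    rw [div_le_div_iff₀ (by positivity : (0:ℝ) < m ^ 2) hm0]
    have hx14 : x * (1 - x) ≤ 1 / 4 := by nlinarith [sq_nonneg (2 * x - 1)]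
    have hnx : (n : ℝ) * (x * (1 - x)) ≤ (n : ℝ) * (1 / 4) :=
      mul_le_mul_of_nonneg_left hx14 (Nat.cast_nonneg n)
    have hx2 : x ^ 2 ≤ 1 := by nlinarith [hx.1, hx.2]
    have hn0 : (0:ℝ) ≤ (n:ℝ) := Nat.cast_nonneg n
    nlinarith [hnx, hx2, hn0, sq_nonneg ((n:ℝ) + 1)]
  -- conclusion
  have htail : 8 * M / δ ^ 2 * (2 / m) ≤ ε / 4 := by
    rw [div_le_iff₀ (by positivity : (0:ℝ) < ε * δ ^ 2)] at hB
    rw [div_mul_div_comm, div_le_div_iff₀ (by positivity : (0:ℝ) < δ ^ 2 * m) (by norm_num : (0:ℝ) < 4)]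
    nlinarith
  have hVc : 8 * M / δ ^ 2 * ∑ k ∈ Finset.range (n + 1), p k * ((k : ℝ) / m - x) ^ 2
      ≤ 8 * M / δ ^ 2 * (2 / m) := mul_le_mul_of_nonneg_left hV (by positivity)
  rw [Real.dist_eq]
  calc |bernsteinKantorovich n f x - f x| ≤ ∑ k ∈ Finset.range (n + 1), p k * C k := hmain
    _ = ε / 2 + 8 * M / δ ^ 2 * ∑ k ∈ Finset.range (n + 1), p k * ((k : ℝ) / m - x) ^ 2 := hsumC
    _ ≤ ε / 2 + ε / 4 := by linarith
    _ < ε := by linarith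

theorem bernsteinKantorovich_tendsto (f : ℝ → ℝ)
    (hfb : ∃ M : ℝ, ∀ x ∈ Icc (0 : ℝ) 1, |f x| ≤ M)
    (hfc : volume {x ∈ Icc (0 : ℝ) 1 | ¬ ContinuousWithinAt f (Icc (0 : ℝ) 1) x} = 0) :
    (∀ x ∈ Icc (0 : ℝ) 1, ContinuousWithinAt f (Icc (0 : ℝ) 1) x →
      Tendsto (fun n => bernsteinKantorovich n f x) atTop (𝓝 (f x))) ∧
    (∀ᵐ x ∂(volume.restrict (Icc (0 : ℝ) 1)),
      Tendsto (fun n => bernsteinKantorovich n f x) atTop (𝓝 (f x))) := by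
  obtain ⟨M, hM⟩ := hfb
  have hint : IntegrableOn f (Icc (0 : ℝ) 1) volume := by
    obtain ⟨D, hDsub, hDmeas, hD0⟩ := exists_measurable_superset_of_null hfc
    set S : Set ℝ := Icc (0 : ℝ) 1 \ D with hSdef
    have hSmeas : MeasurableSet S := measurableSet_Icc.diff hDmeas
    have hcont : ContinuousOn f S := by
      intro y hy
      have hyc : ContinuousWithinAt f (Icc (0 : ℝ) 1) y := by
        by_contra h
        exact hy.2 (hDsub ⟨hy.1, h⟩)
      exact hyc.mono diff_subset
    have hSae : S =ᵐ[volume] Icc (0 : ℝ) 1 := by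
      rw [MeasureTheory.ae_eq_set]
      constructor
      · apply measure_mono_null (t := D) _ hD0
        intro y hy
        exact absurd hy.1.1 hy.2
      · apply measure_mono_null (t := D) _ hD0
        intro y hy
        by_contra h
        exact hy.2 ⟨hy.1, h⟩
    have hAE : AEStronglyMeasurable f (volume.restrict (Icc (0 : ℝ) 1)) := by
      rw [← Measure.restrict_congr_set hSae]
      exact hcont.aestronglyMeasurable hSmeas
    refine Integrable.mono' (g := fun _ => M) (integrableOn_const measure_Icc_lt_top.ne) hAE ?_
    filter_upwards [ae_restrict_mem measurableSet_Icc] with y hy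
    rw [Real.norm_eq_abs]
    exact hM y hy
  refine ⟨fun x hx hcx => bk_pointwise f M hM hint x hx hcx, ?_⟩
  have h2 : ∀ᵐ x ∂(volume.restrict (Icc (0 : ℝ) 1)), ContinuousWithinAt f (Icc (0 : ℝ) 1) x := by
    rw [MeasureTheory.ae_iff, Measure.restrict_apply' measurableSet_Icc]
    apply measure_mono_null _ hfc
    intro y hy
    exact ⟨hy.2, hy.1⟩
  filter_upwards [ae_restrict_mem measurableSet_Icc, h2] with y h1 h2'
  exact bk_pointwise f M hM hint y h1 h2'
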